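/- For n ≥ 5, the alternating group A_n (viewed as permutations of {1,…,n}) is a product of 3 conjugates of the point stabilizer of n (a subgroup isomorphic to A_{n-1}). That is, there exist g₁, g₂, g₃ ∈ A_n with A_n = H^{g₁} · H^{g₂} · H^{g₃}, where H = {σ ∈ A_n : σ(n) = n}. -/

import Mathlib

open scoped Pointwise

/-- A conjugate `g⁻¹ A g` of a subset `A`. -/
def conjSet {G : Type*} [Group G] (g : G) (A : Set G) : Set G :=
  (fun a => g⁻¹ * a * g) '' A

open Equiv Equiv.Perm in
/-- In `A_n` (`n ≥ 5`) there is an even permutation fixing `c` and sending `a` to `b`,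
provided `a ≠ c` and `b ≠ c`. -/
lemma exists_even_move {n : ℕ} (hn : 5 ≤ n) (a b c : Fin n) (hac : a ≠ c) (hbc : b ≠ c) :
    ∃ σ : alternatingGroup (Fin n), (σ : Equiv.Perm (Fin n)) a = b ∧
      (σ : Equiv.Perm (Fin n)) c = c := by
  rcases eq_or_ne a b with rfl | hab
  · exact ⟨1, rfl, rfl⟩
  · -- pick d ∉ {a, b, c}
    have hd : ∃ d : Fin n, d ∉ ({a, b, c} : Finset (Fin n)) := by
      by_contra h
      push_neg at h
      have hsub : (Finset.univ : Finset (Fin n)) ⊆ {a, b, c} := fun x _ => h x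
      have := Finset.card_le_card hsub
      simp only [Finset.card_univ, Fintype.card_fin] at this
      have h3 : ({a, b, c} : Finset (Fin n)).card ≤ 3 := by
        apply le_trans (Finset.card_insert_le _ _)
        have := Finset.card_insert_le b ({c} : Finset (Fin n))
        simp at this ⊢
        omega
      omega
    obtain ⟨d, hd⟩ := hd
    simp only [Finset.mem_insert, Finset.mem_singleton, not_or] at hd
    obtain ⟨hda, hdb, hdc⟩ := hd
    refine ⟨⟨Equiv.swap a d * Equiv.swap a b, ?_⟩, ?_, ?_⟩
    · simp [Equiv.Perm.mem_alternatingGroup, Equiv.Perm.sign_swap,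
        (Ne.symm hda), hab]
    · simp only [Subtype.coe_mk, Equiv.Perm.mul_apply]
      rw [Equiv.swap_apply_left, Equiv.swap_apply_of_ne_of_ne hab.symm (Ne.symm hdb)]
    · simp only [Subtype.coe_mk, Equiv.Perm.mul_apply]
      rw [Equiv.swap_apply_of_ne_of_ne (Ne.symm hac) (Ne.symm hbc),
        Equiv.swap_apply_of_ne_of_ne (Ne.symm hac) (Ne.symm hdc)]

lemma conjSet_stab {n : ℕ} (g : alternatingGroup (Fin n)) (p : Fin n) :
    conjSet g {σ : alternatingGroup (Fin n) | (σ : Equiv.Perm (Fin n)) p = p} =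
      {σ : alternatingGroup (Fin n) |
        (σ : Equiv.Perm (Fin n)) ((g : Equiv.Perm (Fin n))⁻¹ p) =
          (g : Equiv.Perm (Fin n))⁻¹ p} := by
  ext τ
  constructor
  · rintro ⟨a, ha, rfl⟩
    simp only [Set.mem_setOf_eq] at ha ⊢
    simp [Equiv.Perm.mul_apply, ha]
  · intro hτ
    simp only [Set.mem_setOf_eq] at hτ
    refine ⟨g * τ * g⁻¹, ?_, by group⟩
    simp only [Set.mem_setOf_eq, Subgroup.coe_mul, InvMemClass.coe_inv,
      Equiv.Perm.mul_apply]
    rw [hτ]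
    simp

/-- For `n ≥ 5`, the alternating group `A_n` is a product of 3 conjugates of
the stabilizer of the last point (a copy of `A_{n-1}`). -/
theorem alternating_eq_prod_three_conjugates_stabilizer (n : ℕ) (hn : 5 ≤ n)
    (p : Fin n) (hp : (p : ℕ) = n - 1) :
    ∃ g₁ g₂ g₃ : alternatingGroup (Fin n),
      conjSet g₁ {σ : alternatingGroup (Fin n) | (σ : Equiv.Perm (Fin n)) p = p} *
        conjSet g₂ {σ : alternatingGroup (Fin n) | (σ : Equiv.Perm (Fin n)) p = p} *
        conjSet g₃ {σ : alternatingGroup (Fin n) | (σ : Equiv.Perm (Fin n)) p = p} =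
      (Set.univ : Set (alternatingGroup (Fin n))) := by
  -- two auxiliary points distinct from p
  have h0 : (0 : ℕ) < n := by omega
  have h1 : (1 : ℕ) < n := by omega
  set q : Fin n := ⟨0, h0⟩ with hq
  set y : Fin n := ⟨1, h1⟩ with hy
  have hqp : q ≠ p := by
    intro h; apply_fun (Fin.val) at h; simp [hq, hp] at h; omega
  have hyp : y ≠ p := by
    intro h; apply_fun (Fin.val) at h; simp [hy, hp] at h; omega
  have hyq : y ≠ q := by
    intro h; apply_fun (Fin.val) at h; simp [hy, hq] at h
  -- choose g₂ with g₂⁻¹ p = q : take τ with τ p = q, set g₂ = τ⁻¹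
  obtain ⟨τ, hτp, -⟩ := exists_even_move hn p q y hyp.symm hyq.symm
  refine ⟨1, τ⁻¹, 1, ?_⟩
  rw [conjSet_stab, conjSet_stab]
  have hτinv : ((τ⁻¹ : alternatingGroup (Fin n)) : Equiv.Perm (Fin n))⁻¹ p = q := by
    simp [hτp.symm]
  have h1inv : ((1 : alternatingGroup (Fin n)) : Equiv.Perm (Fin n))⁻¹ p = p := by
    simp
  rw [hτinv, h1inv]
  ext σ
  simp only [Set.mem_univ, iff_true]
  set x : Fin n := (σ : Equiv.Perm (Fin n))⁻¹ p with hx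
  rcases eq_or_ne x q with hxq | hxq
  · -- x = q: need h2 ∈ Stab q with h2⁻¹ p = y, h3 ∈ Stab p with h3⁻¹ y = q
    obtain ⟨h2, h2y, h2q⟩ := exists_even_move hn y p q hyq hqp.symm
    obtain ⟨h3, h3q, h3p⟩ := exists_even_move hn q y p hqp hyp
    have key : σ = (σ * h3⁻¹ * h2⁻¹) * h2 * h3 := by group
    rw [key]
    refine Set.mul_mem_mul (Set.mul_mem_mul ?_ ?_) ?_
    · show ((σ * h3⁻¹ * h2⁻¹ : alternatingGroup (Fin n)) : Equiv.Perm (Fin n)) p = p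
      simp only [Subgroup.coe_mul, InvMemClass.coe_inv, Equiv.Perm.mul_apply]
      have e1 : ((h2 : Equiv.Perm (Fin n)))⁻¹ p = y := by
        rw [← h2y]; exact Equiv.symm_apply_apply _ _
      have e2 : ((h3 : Equiv.Perm (Fin n)))⁻¹ y = q := by
        rw [← h3q]; exact Equiv.symm_apply_apply _ _
      rw [e1, e2, ← hxq]
      exact Equiv.apply_symm_apply _ _
    · show ((h2 : alternatingGroup (Fin n)) : Equiv.Perm (Fin n)) q = q
      exact h2q
    · exact h3p
  · -- x ≠ q: take h2 ∈ Stab q with h2 x = p, h3 = 1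
    obtain ⟨h2, h2x, h2q⟩ := exists_even_move hn x p q hxq hqp.symm
    have key : σ = (σ * h2⁻¹) * h2 * 1 := by group
    rw [key]
    refine Set.mul_mem_mul (Set.mul_mem_mul ?_ ?_) ?_
    · show ((σ * h2⁻¹ : alternatingGroup (Fin n)) : Equiv.Perm (Fin n)) p = p
      simp only [Subgroup.coe_mul, InvMemClass.coe_inv, Equiv.Perm.mul_apply]
      have e1 : ((h2 : Equiv.Perm (Fin n)))⁻¹ p = x := by
        rw [← h2x]; exact Equiv.symm_apply_apply _ _
      rw [e1]
      exact Equiv.apply_symm_apply _ _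
    · exact h2q
    · show ((1 : alternatingGroup (Fin n)) : Equiv.Perm (Fin n)) p = p
      simp
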